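/- Let Δ_n = {(a,b,c) ∈ ℤ³ : a+b+c = n−1, a,b,c ≥ 0}, and for i = 1,2,3 let H_i be the subgroup of Sym(Δ_n) consisting of permutations π such that (π(x))_i = x_i for all x ∈ Δ_n. Then H_1, H_2, H_3 satisfy the triple product property in Sym(Δ_n). -/

import Mathlib

def Delta (n : ℕ) : Type :=
  {x : Fin 3 → ℤ // (∑ i, x i) = (n : ℤ) - 1 ∧ ∀ i, 0 ≤ x i}

/-- The subgroup of permutations of `Δ_n` preserving the `i`-th coordinate. -/
def coordSubgroup (n : ℕ) (i : Fin 3) : Set (Equiv.Perm (Delta n)) :=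
  {π | ∀ x : Delta n, (π x).val i = x.val i}

theorem stmt_3 (n : ℕ)
    (h₁ : Equiv.Perm (Delta n)) (h₂ : Equiv.Perm (Delta n)) (h₃ : Equiv.Perm (Delta n))
    (hh₁ : h₁ ∈ coordSubgroup n 0) (hh₂ : h₂ ∈ coordSubgroup n 1)
    (hh₃ : h₃ ∈ coordSubgroup n 2) (h : h₁ * h₂ * h₃ = 1) :
    h₁ = 1 ∧ h₂ = 1 ∧ h₃ = 1 := by
  have hh₁' : ∀ x : Delta n, (h₁ x).val 0 = x.val 0 := hh₁
  have hh₂' : ∀ x : Delta n, (h₂ x).val 1 = x.val 1 := hh₂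
  have hh₃' : ∀ x : Delta n, (h₃ x).val 2 = x.val 2 := hh₃
  have sum3 : ∀ x : Delta n, x.val 0 + x.val 1 + x.val 2 = (n : ℤ) - 1 := by
    intro x
    have := x.2.1
    rwa [Fin.sum_univ_three] at this
  have nonneg : ∀ (x : Delta n) (i : Fin 3), 0 ≤ x.val i := fun x => x.2.2
  have ext3 : ∀ x y : Delta n, x.val 1 = y.val 1 → x.val 2 = y.val 2 → x = y := by
    intro x y h1 h2
    have hx := sum3 x
    have hy := sum3 y
    apply Subtype.ext
    funext i
    fin_cases i
    · show x.val 0 = y.val 0; linarith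
    · exact h1
    · exact h2
  have ext3' : ∀ x y : Delta n, x.val 0 = y.val 0 → x.val 1 = y.val 1 → x = y := by
    intro x y h0 h1
    have hx := sum3 x
    have hy := sum3 y
    apply Subtype.ext
    funext i
    fin_cases i
    · exact h0
    · exact h1
    · show x.val 2 = y.val 2; linarith
  have happ : ∀ x : Delta n, h₂ (h₃ x) = h₁⁻¹ x := by
    intro x
    have h1 : (h₁ * h₂ * h₃) x = x := by rw [h]; rfl
    have h2 : h₁ (h₂ (h₃ x)) = x := h1
    calc h₂ (h₃ x) = h₁⁻¹ (h₁ (h₂ (h₃ x))) := (Equiv.symm_apply_apply h₁ _).symm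
      _ = h₁⁻¹ x := by rw [h2]
  have hinv₁ : ∀ x : Delta n, (h₁⁻¹ x).val 0 = x.val 0 := by
    intro x
    have := hh₁' (h₁⁻¹ x)
    rw [show h₁ (h₁⁻¹ x) = x from Equiv.apply_symm_apply h₁ x] at this
    exact this.symm
  have hinv₃ : ∀ x : Delta n, (h₃⁻¹ x).val 2 = x.val 2 := by
    intro x
    have := hh₃' (h₃⁻¹ x)
    rw [show h₃ (h₃⁻¹ x) = x from Equiv.apply_symm_apply h₃ x] at this
    exact this.symm
  -- Main induction: on k = (n-1) - x₂ (descending on x₂)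
  have key : ∀ k : ℕ, ∀ x : Delta n, x.val 2 = (n : ℤ) - 1 - k → h₃ x = x ∧ h₂ x = x := by
    intro k
    induction k using Nat.strong_induction_on with
    | _ k IH =>
    -- IH in convenient form
    have IH' : ∀ y : Delta n, (n : ℤ) - 1 - k < y.val 2 → h₃ y = y ∧ h₂ y = y := by
      intro y hy
      have h0 := nonneg y 0
      have h1 := nonneg y 1
      have h2 := nonneg y 2
      have hs := sum3 y
      have hj : ((n : ℤ) - 1 - y.val 2).toNat < k := by omega
      exact IH _ hj y (by omega)
    -- Step A: for points on the line, h₃ weakly increases coordinate 1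
    have stepA : ∀ z : Delta n, z.val 2 = (n : ℤ) - 1 - k → z.val 1 ≤ (h₃ z).val 1 := by
      intro z hz
      have hz'2 : (h₃ z).val 2 = z.val 2 := hh₃' z
      have hz''1 : (h₂ (h₃ z)).val 1 = (h₃ z).val 1 := hh₂' (h₃ z)
      have hz''0 : (h₂ (h₃ z)).val 0 = z.val 0 := by
        rw [happ z]; exact hinv₁ z
      have hz''2 : (h₂ (h₃ z)).val 2 ≤ (n : ℤ) - 1 - k := by
        by_contra hlt
        push_neg at hlt
        have hfix := (IH' (h₂ (h₃ z)) hlt).2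
        have heq : h₃ z = h₂ (h₃ z) := h₂.injective (by rw [hfix])
        have : (h₃ z).val 2 = (h₂ (h₃ z)).val 2 := congrArg (fun w : Delta n => w.val 2) heq
        omega
      have hsz := sum3 z
      have hsz'' := sum3 (h₂ (h₃ z))
      linarith
    -- Step B: h₃ fixes the line
    have hfix3 : ∀ z : Delta n, z.val 2 = (n : ℤ) - 1 - k → h₃ z = z := by
      by_contra hcon
      push_neg at hcon
      obtain ⟨z0, hz0c, hz0ne⟩ := hcon
      set T : Set ℕ := {m | ∃ z : Delta n, z.val 2 = (n : ℤ) - 1 - k ∧ h₃ z ≠ z ∧ (z.val 1).toNat = m} with hT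
      have hTne : T.Nonempty := ⟨(z0.val 1).toNat, z0, hz0c, hz0ne, rfl⟩
      obtain ⟨x, hxc, hxne, hxm⟩ := Nat.sInf_mem hTne
      have hy2 : (h₃⁻¹ x).val 2 = x.val 2 := hinv₃ x
      have hyx : h₃ (h₃⁻¹ x) = x := Equiv.apply_symm_apply h₃ x
      have hyne : h₃ (h₃⁻¹ x) ≠ h₃⁻¹ x := by
        intro hc
        have hxy : h₃⁻¹ x = x := by rw [← hc, hyx]
        have hfinal : h₃ x = h₃ (h₃⁻¹ x) := congrArg h₃ hxy.symm
        rw [hyx] at hfinal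
        exact hxne hfinal
      have hle : (h₃⁻¹ x).val 1 ≤ x.val 1 := by
        have := stepA (h₃⁻¹ x) (by rw [hy2, hxc])
        rwa [hyx] at this
      have hge : x.val 1 ≤ (h₃⁻¹ x).val 1 := by
        have hmem : ((h₃⁻¹ x).val 1).toNat ∈ T := ⟨h₃⁻¹ x, by rw [hy2, hxc], hyne, rfl⟩
        have hsle : sInf T ≤ ((h₃⁻¹ x).val 1).toNat := Nat.sInf_le hmem
        have h1 := nonneg x 1
        have h2 := nonneg (h₃⁻¹ x) 1
        omega
      have hxy : h₃⁻¹ x = x := ext3 _ _ (le_antisymm hle hge) (by rw [hy2])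
      rw [hxy] at hyx
      exact hxne hyx
    -- Step C: conclude for this line
    intro x hx
    have h3x : h₃ x = x := hfix3 x hx
    refine ⟨h3x, ?_⟩
    have h2x : h₂ x = h₁⁻¹ x := by
      have := happ x
      rwa [h3x] at this
    have h0 : (h₂ x).val 0 = x.val 0 := by rw [h2x]; exact hinv₁ x
    have h1 : (h₂ x).val 1 = x.val 1 := hh₂' x
    exact ext3' _ _ h0 h1
  have hfix : ∀ x : Delta n, h₃ x = x ∧ h₂ x = x := by
    intro x
    have h0 := nonneg x 0
    have h1 := nonneg x 1
    have h2 := nonneg x 2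
    have hs := sum3 x
    exact key ((n : ℤ) - 1 - x.val 2).toNat x (by omega)
  have h3id : h₃ = 1 := Equiv.ext fun x => (hfix x).1
  have h2id : h₂ = 1 := Equiv.ext fun x => (hfix x).2
  have h1id : h₁ = 1 := by
    rw [h2id, h3id, mul_one, mul_one] at h
    exact h
  exact ⟨h1id, h2id, h3id⟩
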